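/- Let R be a ring, b ∈ Z(R) a nilpotent central element, l ≥ 1, z ∈ Z(R) a central non-zero-divisor, and φ a ring automorphism of R with φ^l(z) − z ∈ bR. Set τ = z·φ(z)⋯φ^{l−1}(z) = y^l x^l. Then for every M ∈ 𝒪(H(R, φ, z)) the element τ acts locally nilpotently on M: for every m ∈ M there exists n with τⁿ·m = 0. -/

import Mathlib

universe u

variable (R : Type u) [Ring R] (φ : R ≃+* R) (z : R)

/-- The defining relations of the generalized Weyl algebra `H(R, φ, z)`, presented as a quotient
of the free `ℤ`-algebra on the underlying set of `R` together with two generators `x` (encoded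
as `Sum.inr 0`) and `y` (encoded as `Sum.inr 1`).  The first three families of relations encode
the ring structure of `R`; the remaining ones are the GWA relations
`yx = z`, `xy = φ⁻¹(z)`, `xr = φ⁻¹(r)x`, `yr = φ(r)y`. -/
inductive GWARel : FreeAlgebra ℤ (R ⊕ Fin 2) → FreeAlgebra ℤ (R ⊕ Fin 2) → Prop
  | add (r s : R) : GWARel
      (FreeAlgebra.ι ℤ (Sum.inl r) + FreeAlgebra.ι ℤ (Sum.inl s))
      (FreeAlgebra.ι ℤ (Sum.inl (r + s)))
  | mul (r s : R) : GWARel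
      (FreeAlgebra.ι ℤ (Sum.inl r) * FreeAlgebra.ι ℤ (Sum.inl s))
      (FreeAlgebra.ι ℤ (Sum.inl (r * s)))
  | one : GWARel (FreeAlgebra.ι ℤ (Sum.inl (1 : R))) 1
  | yx : GWARel (FreeAlgebra.ι ℤ (Sum.inr 1) * FreeAlgebra.ι ℤ (Sum.inr 0))
      (FreeAlgebra.ι ℤ (Sum.inl z))
  | xy : GWARel (FreeAlgebra.ι ℤ (Sum.inr 0) * FreeAlgebra.ι ℤ (Sum.inr 1))
      (FreeAlgebra.ι ℤ (Sum.inl (φ.symm z)))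
  | xr (r : R) : GWARel (FreeAlgebra.ι ℤ (Sum.inr 0) * FreeAlgebra.ι ℤ (Sum.inl r))
      (FreeAlgebra.ι ℤ (Sum.inl (φ.symm r)) * FreeAlgebra.ι ℤ (Sum.inr 0))
  | yr (r : R) : GWARel (FreeAlgebra.ι ℤ (Sum.inr 1) * FreeAlgebra.ι ℤ (Sum.inl r))
      (FreeAlgebra.ι ℤ (Sum.inl (φ r)) * FreeAlgebra.ι ℤ (Sum.inr 1))

/-- The generalized Weyl algebra `H(R, φ, z)`. -/
abbrev GWA : Type u := RingQuot (GWARel R φ z)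

/-- The generator `x` of the generalized Weyl algebra. -/
noncomputable def GWA.X : GWA R φ z :=
  RingQuot.mkRingHom (GWARel R φ z) (FreeAlgebra.ι ℤ (Sum.inr 0))

/-- The generator `y` of the generalized Weyl algebra. -/
noncomputable def GWA.Y : GWA R φ z :=
  RingQuot.mkRingHom (GWARel R φ z) (FreeAlgebra.ι ℤ (Sum.inr 1))

/-- The canonical ring homomorphism `R → H(R, φ, z)`. -/
noncomputable def GWA.ofBase : R →+* GWA R φ z where
  toFun r := RingQuot.mkRingHom (GWARel R φ z) (FreeAlgebra.ι ℤ (Sum.inl r))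
  map_one' := by
    have := RingQuot.mkRingHom_rel (GWARel.one (R := R) (φ := φ) (z := z))
    simpa using this
  map_mul' r s := by
    have := RingQuot.mkRingHom_rel (GWARel.mul (φ := φ) (z := z) r s)
    simp only [map_mul] at this
    exact this.symm
  map_zero' := by
    have := RingQuot.mkRingHom_rel (GWARel.add (φ := φ) (z := z) 0 0)
    simp only [map_add, add_zero] at this
    exact add_eq_left.mp this
  map_add' r s := by
    have := RingQuot.mkRingHom_rel (GWARel.add (φ := φ) (z := z) r s)
    simp only [map_add] at this
    exact this.symm

lemma ofBase_apply (r : R) : GWA.ofBase R φ z r =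
    RingQuot.mkRingHom (GWARel R φ z) (FreeAlgebra.ι ℤ (Sum.inl r)) := rfl

lemma gwa_yx : GWA.Y R φ z * GWA.X R φ z = GWA.ofBase R φ z z := by
  rw [GWA.X, GWA.Y, ofBase_apply, ← map_mul]
  exact RingQuot.mkRingHom_rel GWARel.yx

lemma gwa_xr (r : R) : GWA.X R φ z * GWA.ofBase R φ z r =
    GWA.ofBase R φ z (φ.symm r) * GWA.X R φ z := by
  rw [GWA.X, ofBase_apply, ofBase_apply, ← map_mul, ← map_mul]
  exact RingQuot.mkRingHom_rel (GWARel.xr r)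

lemma gwa_yr (r : R) : GWA.Y R φ z * GWA.ofBase R φ z r =
    GWA.ofBase R φ z (φ r) * GWA.Y R φ z := by
  rw [GWA.Y, ofBase_apply, ofBase_apply, ← map_mul, ← map_mul]
  exact RingQuot.mkRingHom_rel (GWARel.yr r)

example (i : ℕ) (a : R) : (φ ^ (i+1)) a = φ ((φ^i) a) := by
  rw [pow_succ']
  rfl

example (i : ℕ) (a : R) : φ.symm ((φ^(i+1)) a) = (φ^i) a := by
  rw [pow_succ']
  exact φ.symm_apply_apply _

/-- τ_l -/
def tauP (l : ℕ) : R := ((List.range l).map fun i => (φ ^ i) z).prod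

lemma pow_center (hz : z ∈ Set.center R) (i : ℕ) : (φ ^ i) z ∈ Set.center R := by
  rw [Semigroup.mem_center_iff] at hz ⊢
  intro g
  have : (φ ^ i) z * g = (φ ^ i) (z * (φ ^ i).symm g) := by
    rw [map_mul, RingEquiv.apply_symm_apply]
  rw [this, ← hz, map_mul, RingEquiv.apply_symm_apply]

lemma symm_center {a : R} (ha : a ∈ Set.center R) : φ.symm a ∈ Set.center R := by
  rw [Semigroup.mem_center_iff] at ha ⊢
  intro g
  calc g * φ.symm a = φ.symm (φ g * a) := by rw [map_mul, φ.symm_apply_apply]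
    _ = φ.symm (a * φ g) := by rw [ha]
    _ = φ.symm a * g := by rw [map_mul, φ.symm_apply_apply]

lemma tauP_center (hz : z ∈ Set.center R) (l : ℕ) : tauP R φ z l ∈ Set.center R := by
  induction l with
  | zero => simpa [tauP] using Set.one_mem_center
  | succ n ih =>
      rw [tauP, List.range_succ, List.map_append, List.prod_append]
      exact Set.mul_mem_center ih (by simpa using pow_center R φ z hz n)

lemma tauP_succ (l : ℕ) : tauP R φ z (l+1) = tauP R φ z l * (φ ^ l) z := by
  rw [tauP, List.range_succ, List.map_append, List.prod_append]
  simp [tauP]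

lemma tauP_succ' (hz : z ∈ Set.center R) (l : ℕ) :
    tauP R φ z (l+1) = φ (tauP R φ z l) * z := by
  have hφ : φ (tauP R φ z l) = ((List.range l).map fun i => (φ ^ (i+1)) z).prod := by
    rw [tauP, map_list_prod φ, List.map_map]
    congr 1
    apply List.map_congr_left
    intro i _
    show φ ((φ ^ i) z) = (φ ^ (i+1)) z
    rw [pow_succ']; rfl
  have h2 : tauP R φ z (l+1) = z * ((List.range l).map fun i => (φ ^ (i+1)) z).prod := by
    rw [tauP, List.range_succ_eq_map, List.map_cons, List.prod_cons, List.map_map]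
    rw [pow_zero]
    rfl
  rw [h2, hφ, Semigroup.mem_center_iff.mp hz]

lemma ofBase_tauP (hz : z ∈ Set.center R) (l : ℕ) :
    GWA.ofBase R φ z (tauP R φ z l) = GWA.Y R φ z ^ l * GWA.X R φ z ^ l := by
  induction l with
  | zero => simp [tauP]
  | succ n ih =>
      rw [tauP_succ' R φ z hz, map_mul]
      calc GWA.ofBase R φ z (φ (tauP R φ z n)) * GWA.ofBase R φ z z
          = GWA.ofBase R φ z (φ (tauP R φ z n)) * (GWA.Y R φ z * GWA.X R φ z) := by
            rw [gwa_yx]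
        _ = (GWA.ofBase R φ z (φ (tauP R φ z n)) * GWA.Y R φ z) * GWA.X R φ z := by
            rw [mul_assoc]
        _ = (GWA.Y R φ z * GWA.ofBase R φ z (tauP R φ z n)) * GWA.X R φ z := by
            rw [gwa_yr]
        _ = GWA.Y R φ z * (GWA.Y R φ z ^ n * GWA.X R φ z ^ n) * GWA.X R φ z := by
            rw [ih]
        _ = (GWA.Y R φ z * GWA.Y R φ z ^ n) * (GWA.X R φ z ^ n * GWA.X R φ z) := by
            noncomm_ring
        _ = GWA.Y R φ z ^ (n+1) * GWA.X R φ z ^ (n+1) := by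
            rw [← pow_succ', ← pow_succ]

lemma symm_tauP (hz : z ∈ Set.center R) (b r : R) (hb : b ∈ Set.center R) (k : ℕ)
    (hφl : (φ ^ (k+1)) z - z = b * r) :
    ∃ s : R, φ.symm (tauP R φ z (k+1)) = tauP R φ z (k+1) - φ.symm b * s := by
  refine ⟨tauP R φ z k * φ.symm r, ?_⟩
  have hz' : φ.symm z = (φ ^ k) z - φ.symm b * φ.symm r := by
    have h1 : z = (φ ^ (k+1)) z - b * r := by rw [← hφl, sub_sub_cancel]
    have h2 : φ.symm ((φ ^ (k+1)) z) = (φ ^ k) z := by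
      rw [pow_succ']; exact φ.symm_apply_apply _
    calc φ.symm z = φ.symm ((φ ^ (k+1)) z - b * r) := by rw [← h1]
      _ = φ.symm ((φ ^ (k+1)) z) - φ.symm (b * r) := by rw [map_sub]
      _ = (φ ^ k) z - φ.symm b * φ.symm r := by rw [h2, map_mul]
  have hb1 : ∀ g : R, g * φ.symm b = φ.symm b * g :=
    Semigroup.mem_center_iff.mp (symm_center R φ hb)
  calc φ.symm (tauP R φ z (k+1)) = φ.symm (φ (tauP R φ z k) * z) := by
        rw [← tauP_succ' R φ z hz]
    _ = tauP R φ z k * φ.symm z := by rw [map_mul, φ.symm_apply_apply]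
    _ = tauP R φ z k * ((φ ^ k) z - φ.symm b * φ.symm r) := by rw [hz']
    _ = tauP R φ z k * (φ ^ k) z - tauP R φ z k * (φ.symm b * φ.symm r) := by rw [mul_sub]
    _ = tauP R φ z (k+1) - φ.symm b * (tauP R φ z k * φ.symm r) := by
        rw [← tauP_succ, ← mul_assoc, hb1, mul_assoc]

/-- Let `R` be a ring, `b` a nilpotent central element, `l ≥ 1`, `z` a central
non-zero-divisor, and `φ` a ring automorphism of `R` with `φ^l(z) − z ∈ bR`.  Set
`τ = z·φ(z)⋯φ^{l−1}(z) ( = y^l x^l)`.  Then for every left `H(R, φ, z)`-module `M` on which `x`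
acts locally nilpotently, the element `τ` acts locally nilpotently on `M`. -/
theorem statement7 (b : R) (hb : b ∈ Set.center R) (hbnil : IsNilpotent b)
    (l : ℕ) (hl : 1 ≤ l) (hz : z ∈ Set.center R)
    (hznzd : (∀ r : R, r * z = 0 → r = 0) ∧ (∀ r : R, z * r = 0 → r = 0))
    (hφl : ∃ r : R, (φ ^ l) z - z = b * r)
    (M : Type u) [AddCommGroup M] [Module (GWA R φ z) M]
    (hM : ∀ m : M, ∃ n : ℕ, (GWA.X R φ z) ^ n • m = 0) :
    ∀ m : M, ∃ n : ℕ,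
      (GWA.ofBase R φ z (((List.range l).map fun i => (φ ^ i) z).prod)) ^ n • m = 0 := by
  obtain ⟨k, rfl⟩ : ∃ k, l = k + 1 := ⟨l - 1, (Nat.succ_pred_eq_of_pos hl).symm⟩
  obtain ⟨r, hr⟩ := hφl
  obtain ⟨N, hN⟩ := hbnil
  set X := GWA.X R φ z with hX
  set Y := GWA.Y R φ z with hY
  set f := GWA.ofBase R φ z with hf
  set τ := tauP R φ z (k+1) with hτ
  show ∀ m : M, ∃ n : ℕ, (f τ) ^ n • m = 0
  -- τ is central
  have hτc : ∀ g : R, g * τ = τ * g :=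
    Semigroup.mem_center_iff.mp (tauP_center R φ z hz (k+1))
  -- b₁ := φ.symm b
  have hb1c : ∀ g : R, g * φ.symm b = φ.symm b * g :=
    Semigroup.mem_center_iff.mp (symm_center R φ hb)
  have hb1N : (φ.symm b) ^ N = 0 := by rw [← map_pow, hN, map_zero]
  obtain ⟨s, hs⟩ := symm_tauP R φ z hz b r hb k hr
  -- if X kills v, then f τ kills v
  have key : ∀ v : M, X • v = 0 → f τ • v = 0 := by
    intro v hv
    rw [ofBase_tauP R φ z hz (k+1), pow_succ X, ← mul_assoc, mul_smul, hv, smul_zero]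
  -- main induction
  have main : ∀ (j : ℕ) (m : M), X ^ j • m = 0 → ∃ n, (f τ) ^ n • m = 0 := by
    intro j
    induction j with
    | zero =>
        intro m hm
        rw [pow_zero, one_smul] at hm
        exact ⟨0, by rw [pow_zero, one_smul, hm]⟩
    | succ j ih =>
        intro m hm
        have hxm : X ^ j • (X • m) = 0 := by rw [← mul_smul, ← pow_succ]; exact hm
        obtain ⟨n0, hn0⟩ := ih (X • m) hxm
        set n := n0 + N with hn
        set c : R := -(φ.symm b * s) with hc
        have hsymmτ : φ.symm τ = τ + c := by rw [hc, ← sub_eq_add_neg]; exact hs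
        have hclaim : X • ((f τ) ^ n • m) = 0 := by
          have step1 : X • ((f τ) ^ n • m) = f ((τ + c) ^ n) • (X • m) := by
            rw [← mul_smul, ← map_pow, gwa_xr, ← hsymmτ, map_pow, ← map_pow, mul_smul]
          rw [step1]
          have hcomm : Commute τ c := (hτc c).symm
          rw [hcomm.add_pow, map_sum, Finset.sum_smul]
          apply Finset.sum_eq_zero
          intro i hi
          rcases le_or_gt N (n - i) with h | h
          · have hcz : c ^ (n - i) = 0 := by
              have hbz : (φ.symm b) ^ (n - i) = 0 := by
                rw [show n - i = N + (n - i - N) by omega, pow_add, hb1N, zero_mul]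
              have : (φ.symm b * s) ^ (n - i) = (φ.symm b) ^ (n - i) * s ^ (n - i) :=
                Commute.mul_pow ((hb1c s).symm) _
              rw [hc, neg_pow, this, hbz, zero_mul, mul_zero]
            rw [hcz, mul_zero, zero_mul, map_zero, zero_smul]
          · have hi' : i ∈ Finset.range (n + 1) := hi
            have hile : i ≤ n := by
              have := Finset.mem_range.mp hi'; omega
            have hin0 : n0 ≤ i := by omega
            have h2 : ∀ (g : R) (a : ℕ), τ ^ a * g = g * τ ^ a := by
              intro g a
              exact (Commute.pow_left ((hτc g).symm) a)
            have h1 : τ ^ i = τ ^ (i - n0) * τ ^ n0 := by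
              rw [← pow_add]; congr 1; omega
            have hre : τ ^ i * c ^ (n - i) * ((n.choose i : ℕ) : R)
                = (c ^ (n - i) * ((n.choose i : ℕ) : R) * τ ^ (i - n0)) * τ ^ n0 := by
              rw [mul_assoc, h2 (c ^ (n - i) * ((n.choose i : ℕ) : R)) i, h1, ← mul_assoc]
            rw [hre, map_mul, mul_smul, map_pow, hn0, smul_zero]
        exact ⟨n + 1, by rw [pow_succ', mul_smul]; exact key _ hclaim⟩
  intro m
  obtain ⟨j, hj⟩ := hM m
  exact main j m hj
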